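/- For the logistic loss ℓ(z) = ln(1+e^z), the function φ(z) := zℓ'(z)/ℓ(z) = z/((1+e^{−z})ln(1+e^z)) is increasing on (−∞, 0). -/

import Mathlib

open Real

private lemma denom_pos (z : ℝ) : 0 < (1 + Real.exp (-z)) * Real.log (1 + Real.exp z) := by
  have h1 : (0:ℝ) < 1 + Real.exp (-z) := by positivity
  have h2 : (0:ℝ) < Real.log (1 + Real.exp z) := by
    have : (1:ℝ) < 1 + Real.exp z := by nlinarith [Real.exp_pos z]
    exact Real.log_pos this
  positivity

private lemma hasDerivAt_denom (z : ℝ) :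
    HasDerivAt (fun z : ℝ => (1 + Real.exp (-z)) * Real.log (1 + Real.exp z))
      (-Real.exp (-z) * Real.log (1 + Real.exp z)
        + (1 + Real.exp (-z)) * (Real.exp z / (1 + Real.exp z))) z := by
  have hpos : (0:ℝ) < 1 + Real.exp z := by positivity
  have h1 : HasDerivAt (fun z : ℝ => 1 + Real.exp (-z)) (-Real.exp (-z)) z := by
    have := ((Real.hasDerivAt_exp (-z)).comp z ((hasDerivAt_id z).neg))
    simpa using this.const_add 1
  have h2 : HasDerivAt (fun z : ℝ => Real.log (1 + Real.exp z))
      (Real.exp z / (1 + Real.exp z)) z := by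
    have he : HasDerivAt (fun z : ℝ => 1 + Real.exp z) (Real.exp z) z :=
      (Real.hasDerivAt_exp z).const_add 1
    simpa using he.log (ne_of_gt hpos)
  exact h1.mul h2

private lemma key_ident (z : ℝ) :
    (1 + Real.exp (-z)) * (Real.exp z / (1 + Real.exp z)) = 1 := by
  have hpos : (0:ℝ) < 1 + Real.exp z := by positivity
  have hne : Real.exp z ≠ 0 := Real.exp_ne_zero z
  rw [Real.exp_neg]
  field_simp
  ring

theorem stmt_7 :
    StrictMonoOn (fun z : ℝ => z / ((1 + Real.exp (-z)) * Real.log (1 + Real.exp z)))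
      (Set.Iio 0) := by
  have hcont : ContinuousOn
      (fun z : ℝ => z / ((1 + Real.exp (-z)) * Real.log (1 + Real.exp z))) (Set.Iio 0) := by
    apply Continuous.continuousOn
    apply continuous_id.div
    · exact ((continuous_const.add (Real.continuous_exp.comp continuous_neg)).mul
        ((continuous_const.add Real.continuous_exp).log (fun z => ne_of_gt (by positivity : (0:ℝ) < 1 + Real.exp z))))
    · exact fun z => ne_of_gt (denom_pos z)
  apply strictMonoOn_of_deriv_pos (convex_Iio 0) hcont
  intro z hz
  rw [interior_Iio] at hz
  have hz0 : z < 0 := hz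
  set L := Real.log (1 + Real.exp z) with hLdef
  set a := Real.exp (-z) with hadef
  have hL : 0 < L := Real.log_pos (by nlinarith [Real.exp_pos z])
  have ha : 0 < a := Real.exp_pos _
  have hDpos := denom_pos z
  have hf : HasDerivAt (fun z : ℝ => z / ((1 + Real.exp (-z)) * Real.log (1 + Real.exp z)))
      ((1 * ((1 + a) * L) - z * (-a * L + (1 + a) * (Real.exp z / (1 + Real.exp z))))
        / ((1 + a) * L) ^ 2) z :=
    (hasDerivAt_id z).div (hasDerivAt_denom z) (ne_of_gt hDpos)
  rw [hf.deriv]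
  apply div_pos _ (by positivity)
  rw [key_ident z]
  -- goal: 0 < 1 * ((1 + a) * L) - z * (-a * L + 1)
  have hexp : a * Real.exp z = 1 := by
    rw [hadef, ← Real.exp_add]; simp
  rcases le_or_gt (-1) z with h1 | h1
  · nlinarith [mul_nonneg (mul_nonneg ha.le hL.le) (by linarith : (0:ℝ) ≤ 1 + z)]
  · have hLle : L ≤ Real.exp z := by
      have := Real.log_le_sub_one_of_pos (show (0:ℝ) < 1 + Real.exp z by positivity)
      simpa [hLdef] using this
    have haL1 : a * L ≤ 1 := by
      calc a * L ≤ a * Real.exp z := by nlinarith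
        _ = 1 := hexp
    nlinarith [mul_nonpos_of_nonpos_of_nonneg (by linarith : (1:ℝ) + z ≤ 0)
      (by linarith : (0:ℝ) ≤ 1 - a * L), mul_pos ha hL]
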